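/- In the instance with n = 2 left agents, m = 1 right agent, examination function v(k) = 1/k, preference probabilities p̂1(1,1) = p̂1(2,1) = 1, p̂2(1,1) = 1, p̂2(1,2) = 1 − ε for a constant 0 < ε < 1, the policy π₂ in which A_1 = A_2 = (1) and B_1 = [[1/2, 1/2], [1/2, 1/2]] is double envy-free, but it is not socially optimal: SW(π₂) = 3/4 + 3(1−ε)/4 < 1 + (1−ε)/2 = SW(π₁), where π₁ is the policy with B_1 the 2×2 identity matrix. -/

import Mathlib

open Finset

/-- A `d × d` doubly stochastic matrix: nonnegative entries, all row sums and
all column sums equal to `1`. -/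
def DoublyStochastic {d : ℕ} (S : Fin d → Fin d → ℝ) : Prop :=
  (∀ a b, 0 ≤ S a b) ∧ (∀ a, ∑ b, S a b = 1) ∧ (∀ b, ∑ a, S a b = 1)

/-- Match probability of the pair `(i, j)` under policy `(A, B)`:
`P(i,j) = p_{i,j} · Σ_k Σ_ℓ v(k)·v(ℓ) · A_i(j,k) · B_j(i,ℓ)`
(positions are 1-indexed, so position of index `k : Fin m` is `k+1`). -/
noncomputable def matchProb {n m : ℕ} (p : Fin n → Fin m → ℝ) (v : ℕ → ℝ)
    (A : Fin n → Fin m → Fin m → ℝ) (B : Fin m → Fin n → Fin n → ℝ)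
    (i : Fin n) (j : Fin m) : ℝ :=
  p i j * ∑ k : Fin m, ∑ l : Fin n, (v (k.1 + 1) * v (l.1 + 1)) * (A i j k * B j i l)

/-- Utility of left agent `i`: expected number of matches. -/
noncomputable def Uleft {n m : ℕ} (p : Fin n → Fin m → ℝ) (v : ℕ → ℝ)
    (A : Fin n → Fin m → Fin m → ℝ) (B : Fin m → Fin n → Fin n → ℝ) (i : Fin n) : ℝ :=
  ∑ j : Fin m, matchProb p v A B i j

/-- Utility of right agent `j`: expected number of matches. -/
noncomputable def Vright {n m : ℕ} (p : Fin n → Fin m → ℝ) (v : ℕ → ℝ)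
    (A : Fin n → Fin m → Fin m → ℝ) (B : Fin m → Fin n → Fin n → ℝ) (j : Fin m) : ℝ :=
  ∑ i : Fin n, matchProb p v A B i j

/-- Social welfare: expected total number of matches. -/
noncomputable def SW {n m : ℕ} (p : Fin n → Fin m → ℝ) (v : ℕ → ℝ)
    (A : Fin n → Fin m → Fin m → ℝ) (B : Fin m → Fin n → Fin n → ℝ) : ℝ :=
  ∑ i : Fin n, Uleft p v A B i

/-- `UC p v A B i i'` : the utility left agent `i` receives from the
opportunity `C_{i'}` of left agent `i'`. -/
noncomputable def UC {n m : ℕ} (p : Fin n → Fin m → ℝ) (v : ℕ → ℝ)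
    (A : Fin n → Fin m → Fin m → ℝ) (B : Fin m → Fin n → Fin n → ℝ)
    (i i' : Fin n) : ℝ :=
  ∑ j : Fin m, ∑ k : Fin m, ∑ l : Fin n,
    p i j * (v (k.1 + 1) * v (l.1 + 1)) * (A i j k * B j i' l)

/-- `VD p v A B j j'` : the utility right agent `j` receives from the
opportunity `D_{j'}` of right agent `j'`. -/
noncomputable def VD {n m : ℕ} (p : Fin n → Fin m → ℝ) (v : ℕ → ℝ)
    (A : Fin n → Fin m → Fin m → ℝ) (B : Fin m → Fin n → Fin n → ℝ)
    (j j' : Fin m) : ℝ :=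
  ∑ i : Fin n, ∑ k : Fin m, ∑ l : Fin n,
    p i j * (v (k.1 + 1) * v (l.1 + 1)) * (A i j' k * B j i l)

/-- A policy is double envy-free if no agent envies the opportunity of
another agent on the same side. -/
def DoubleEnvyFree {n m : ℕ} (p : Fin n → Fin m → ℝ) (v : ℕ → ℝ)
    (A : Fin n → Fin m → Fin m → ℝ) (B : Fin m → Fin n → Fin n → ℝ) : Prop :=
  (∀ i i' : Fin n, UC p v A B i i' ≤ UC p v A B i i) ∧
  (∀ j j' : Fin m, VD p v A B j j' ≤ VD p v A B j j)

/-- Left-side Nash social welfare: product of the left agents' utilities. -/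
noncomputable def NSW1 {n m : ℕ} (p : Fin n → Fin m → ℝ) (v : ℕ → ℝ)
    (A : Fin n → Fin m → Fin m → ℝ) (B : Fin m → Fin n → Fin n → ℝ) : ℝ :=
  ∏ i : Fin n, Uleft p v A B i

/-- Right-side Nash social welfare: product of the right agents' utilities. -/
noncomputable def NSW2 {n m : ℕ} (p : Fin n → Fin m → ℝ) (v : ℕ → ℝ)
    (A : Fin n → Fin m → Fin m → ℝ) (B : Fin m → Fin n → Fin n → ℝ) : ℝ :=
  ∏ j : Fin m, Vright p v A B j

/-- Inverse examination function `v(k) = 1/k`. -/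
noncomputable def vInv : ℕ → ℝ := fun k => 1 / (k : ℝ)

/-- Example instance: both left agents fully prefer the single right agent. -/
def p1Ex : Fin 2 → Fin 1 → ℝ := fun _ _ => 1

/-- Example instance: the right agent prefers left agent `1` with probability `1`
and left agent `2` with probability `1 - ε`. -/
noncomputable def p2Ex (ε : ℝ) : Fin 1 → Fin 2 → ℝ :=
  fun _ i => if i = 0 then 1 else 1 - ε

/-- Combined preference probabilities `p_{i,j} = p̂₁(i,j)·p̂₂(j,i)`. -/
noncomputable def pEx (ε : ℝ) : Fin 2 → Fin 1 → ℝ :=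
  fun i j => p1Ex i j * p2Ex ε j i

/-- The (trivial) `1 × 1` recommendation for each left agent. -/
def AEx : Fin 2 → Fin 1 → Fin 1 → ℝ := fun _ _ _ => 1

/-- The right agent's recommendation in policy `π₁` : the identity matrix,
i.e. left agent `1` is always first and left agent `2` always second. -/
def BId : Fin 1 → Fin 2 → Fin 2 → ℝ := fun _ i l => if i = l then 1 else 0

/-- The right agent's recommendation in policy `π₂` : the uniform `2 × 2` matrix. -/
noncomputable def BUnif : Fin 1 → Fin 2 → Fin 2 → ℝ := fun _ _ _ => 1 / 2

/-- In the same instance, the policy `π₂ = (AEx, BUnif)` is double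
envy-free, but it is not socially optimal:
`SW(π₂) = 3/4 + 3(1-ε)/4 < 1 + (1-ε)/2 = SW(π₁)`. -/
theorem example_fair_policy_not_socially_optimal
    (ε : ℝ) (hε0 : 0 < ε) (hε1 : ε < 1) :
    DoubleEnvyFree (pEx ε) vInv AEx BUnif ∧
    SW (pEx ε) vInv AEx BUnif = 3 / 4 + 3 * (1 - ε) / 4 ∧
    SW (pEx ε) vInv AEx BId = 1 + (1 - ε) / 2 ∧
    SW (pEx ε) vInv AEx BUnif < SW (pEx ε) vInv AEx BId := by
  have hSW2 : SW (pEx ε) vInv AEx BUnif = 3 / 4 + 3 * (1 - ε) / 4 := by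
    simp [SW, Uleft, matchProb, pEx, p1Ex, p2Ex, AEx, BUnif, vInv,
      Fin.sum_univ_succ, Fin.isValue]
    ring
  have hSW1 : SW (pEx ε) vInv AEx BId = 1 + (1 - ε) / 2 := by
    simp [SW, Uleft, matchProb, pEx, p1Ex, p2Ex, AEx, BId, vInv,
      Fin.sum_univ_succ, Fin.isValue]
    ring
  refine ⟨⟨?_, ?_⟩, hSW2, hSW1, ?_⟩
  · intro i i'
    simp [UC, pEx, p1Ex, p2Ex, AEx, BUnif, vInv, Fin.sum_univ_succ]
  · intro j j'
    simp [VD, pEx, p1Ex, p2Ex, AEx, BUnif, vInv, Fin.sum_univ_succ]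
  · rw [hSW2, hSW1]; linarith
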